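/- Let s₀, s₁, s₂ be real numbers with min(s₀+s₁, s₁+s₂, s₂+s₀) ≥ 0 and s₀+s₁+s₂ > 1/2. Then for all f ∈ H^{s₁}(𝕋) and g ∈ H^{s₂}(𝕋), the product satisfies ‖fg‖_{H^{−s₀}} ≤ C ‖f‖_{H^{s₁}} ‖g‖_{H^{s₂}}. -/

import Mathlib

noncomputable section

/-- Japanese bracket of an integer: ⟨m⟩ = √(1 + m²). -/
def jb (m : ℤ) : ℝ := Real.sqrt (1 + (m : ℝ) ^ 2)

/-- Sobolev H^s norm of a sequence of Fourier coefficients. -/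
def hsNorm (s : ℝ) (a : ℤ → ℂ) : ℝ := Real.sqrt (∑' k : ℤ, jb k ^ (2 * s) * ‖a k‖ ^ 2)

/-- Fourier coefficients of the product fg: (fg)^(n) = Σ_k f̂(n−k) ĝ(k). -/
def prodCoeff (f g : ℤ → ℂ) : ℤ → ℂ := fun n => ∑' k : ℤ, f (n - k) * g k

namespace S19

lemma one_le_jb (m : ℤ) : 1 ≤ jb m := by
  rw [jb, Real.one_le_sqrt]
  nlinarith [sq_nonneg ((m:ℝ))]

lemma jb_pos (m : ℤ) : 0 < jb m := lt_of_lt_of_le one_pos (one_le_jb m)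

lemma jb_sq (m : ℤ) : jb m ^ 2 = 1 + (m:ℝ)^2 := Real.sq_sqrt (by positivity)

lemma jb_neg (m : ℤ) : jb (-m) = jb m := by simp [jb]

lemma abs_le_jb (m : ℤ) : |(m:ℝ)| ≤ jb m := by
  rw [jb, ← Real.sqrt_sq_eq_abs]
  exact Real.sqrt_le_sqrt (by nlinarith)

lemma jb_triangle (j k : ℤ) : jb (j + k) ≤ jb j + jb k := by
  have hj := jb_sq j; have hk := jb_sq k
  have h1 := abs_le_jb j; have h2 := abs_le_jb k
  have hjk : (j:ℝ) * k ≤ jb j * jb k := by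
    calc (j:ℝ) * k ≤ |(j:ℝ)| * |(k:ℝ)| := by rw [← abs_mul]; exact le_abs_self _
    _ ≤ jb j * jb k := by
        apply mul_le_mul h1 h2 (abs_nonneg _) (jb_pos j).le
  have : jb (j+k) ^ 2 ≤ (jb j + jb k) ^ 2 := by
    rw [jb_sq]; push_cast; nlinarith
  have hnn : 0 ≤ jb j + jb k := by linarith [jb_pos j, jb_pos k]
  nlinarith [jb_pos (j+k), this]


lemma ratio_rpow_le {t : ℝ} (h1 : t ≤ 2) (h2 : 1/2 ≤ t) (b : ℝ) : t ^ b ≤ 2 ^ |b| := by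
  have ht : (0:ℝ) < t := by linarith
  rcases le_or_gt 0 b with hb | hb
  · rw [abs_of_nonneg hb]
    exact Real.rpow_le_rpow ht.le h1 hb
  · rw [abs_of_neg hb]
    have h : t ^ b ≤ ((2:ℝ)⁻¹) ^ b :=
      Real.rpow_le_rpow_of_nonpos (by norm_num) (by linarith) hb.le
    calc t ^ b ≤ ((2:ℝ)⁻¹) ^ b := h
      _ = 2 ^ (-b) := by rw [Real.inv_rpow (by norm_num), ← Real.rpow_neg (by norm_num)]

lemma weight_core {a b c x y z : ℝ} (hbc : 0 ≤ b + c) (hx : 1 ≤ x) (hy : 1 ≤ y)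
    (hz : 1 ≤ z) (hxy : x ≤ y) (hxz : x ≤ z) (hyz : y ≤ x + z) (hzy : z ≤ x + y) :
    x ^ (-a) * (y ^ (-b) * z ^ (-c)) ≤ 2 ^ |b| * x ^ (-(a + b + c)) := by
  have hx0 : (0:ℝ) < x := by linarith
  have hy0 : (0:ℝ) < y := by linarith
  have hz0 : (0:ℝ) < z := by linarith
  -- y ^ (-b) = (z/y)^b * z^(-b)
  have key : y ^ (-b) = (z/y) ^ b * z ^ (-b) := by
    rw [Real.div_rpow hz0.le hy0.le, Real.rpow_neg hz0.le, Real.rpow_neg hy0.le]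
    field_simp
  have hr : (z/y) ^ b ≤ 2 ^ |b| := by
    apply ratio_rpow_le
    · rw [div_le_iff₀ hy0]; linarith
    · rw [le_div_iff₀ hy0]; linarith
  have hzx : z ^ (-b) * z ^ (-c) ≤ x ^ (-b) * x ^ (-c) := by
    rw [← Real.rpow_add hz0, ← Real.rpow_add hx0]
    exact Real.rpow_le_rpow_of_nonpos hx0 hxz (by linarith)
  calc x ^ (-a) * (y ^ (-b) * z ^ (-c))
      = (z/y)^b * (x ^ (-a) * (z ^ (-b) * z ^ (-c))) := by rw [key]; ring
    _ ≤ 2 ^ |b| * (x ^ (-a) * (x ^ (-b) * x ^ (-c))) := by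
        apply mul_le_mul hr ?_ (by positivity) (by positivity)
        have := hzx
        apply mul_le_mul_of_nonneg_left this (by positivity)
    _ = 2 ^ |b| * x ^ (-(a + b + c)) := by
        rw [← Real.rpow_add hx0, ← Real.rpow_add hx0]; ring_nf

open scoped ENNReal NNReal
open MeasureTheory

lemma cs_tsum (u v : ℤ → ℝ≥0∞) :
    (∑' k, u k * v k) ^ 2 ≤ (∑' k, u k ^ 2) * (∑' k, v k ^ 2) := by
  have hpq : Real.HolderConjugate 2 2 := Real.HolderConjugate.two_two
  have h := ENNReal.lintegral_mul_le_Lp_mul_Lq (Measure.count (α := ℤ)) hpq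
    (measurable_of_countable u).aemeasurable (measurable_of_countable v).aemeasurable
  simp only [Pi.mul_apply, lintegral_count] at h
  have h2 : ∀ w : ℤ → ℝ≥0∞, (∑' k, w k ^ (2:ℝ)) = ∑' k, w k ^ 2 := by
    intro w; congr 1; funext k; rw [← ENNReal.rpow_natCast (w k) 2]; norm_num
  rw [h2 u, h2 v] at h
  calc (∑' k, u k * v k) ^ 2
      ≤ ((∑' k, u k ^ 2) ^ (1/(2:ℝ)) * (∑' k, v k ^ 2) ^ (1/(2:ℝ))) ^ 2 := by
        exact pow_le_pow_left' h 2
    _ = (∑' k, u k ^ 2) * (∑' k, v k ^ 2) := by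
        rw [mul_pow, ← ENNReal.rpow_natCast (_ ^ (1/(2:ℝ))) 2,
          ← ENNReal.rpow_natCast ((∑' k, v k ^ 2) ^ (1/(2:ℝ))) 2,
          ← ENNReal.rpow_mul, ← ENNReal.rpow_mul]
        norm_num

lemma sq_add_three (x y z : ℝ≥0∞) : (x + y + z) ^ 2 ≤ 5 * (x^2 + y^2 + z^2) := by
  have key : ∀ p q : ℝ≥0∞, p * q ≤ p^2 + q^2 := by
    intro p q
    rcases le_total p q with h | h
    · calc p * q ≤ q * q := by exact mul_le_mul_left h q
        _ ≤ p^2 + q^2 := by rw [← pow_two]; exact le_add_self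
    · calc p * q ≤ p * p := by exact mul_le_mul_right h p
        _ ≤ p^2 + q^2 := by rw [← pow_two]; exact le_self_add
  have e : (x + y + z) ^ 2 = x^2 + y^2 + z^2 + (x*y + x*y) + (y*z + y*z) + (x*z + x*z) := by
    ring
  rw [e]
  have h1 := key x y; have h2 := key y z; have h3 := key x z
  calc x^2 + y^2 + z^2 + (x*y + x*y) + (y*z + y*z) + (x*z + x*z)
      ≤ x^2 + y^2 + z^2 + ((x^2+y^2) + (x^2+y^2)) + ((y^2+z^2) + (y^2+z^2))
        + ((x^2+z^2) + (x^2+z^2)) := by gcongr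
    _ = 5 * (x^2 + y^2 + z^2) := by ring

lemma conv_sq_le (h m : ℤ → ℝ≥0∞) :
    ∑' n : ℤ, (∑' k : ℤ, h (n - k) * m k) ^ 2
      ≤ (∑' j : ℤ, h j) ^ 2 * (∑' k : ℤ, m k ^ 2) := by
  set H := ∑' j : ℤ, h j with hH
  have hre : ∀ n : ℤ, (∑' k : ℤ, h (n - k)) = H := by
    intro n
    exact ((Equiv.subLeft n).tsum_eq h)
  have hre2 : ∀ k : ℤ, (∑' n : ℤ, h (n - k)) = H := by
    intro k
    rw [← (Equiv.addRight k).tsum_eq (fun n => h (n - k))]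
    simp [hH]
  have inner : ∀ n : ℤ, (∑' k : ℤ, h (n - k) * m k) ^ 2
      ≤ H * ∑' k : ℤ, h (n - k) * m k ^ 2 := by
    intro n
    have hc := cs_tsum (fun k => (h (n - k)) ^ (1/(2:ℝ))) (fun k => (h (n - k)) ^ (1/(2:ℝ)) * m k)
    have e1 : ∀ x : ℝ≥0∞, x ^ (1/(2:ℝ)) * x ^ (1/(2:ℝ)) = x := by
      intro x
      rw [← ENNReal.rpow_add_of_nonneg _ _ (by norm_num) (by norm_num)]
      norm_num
    have e2 : ∀ x : ℝ≥0∞, (x ^ (1/(2:ℝ))) ^ 2 = x := by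
      intro x
      rw [← ENNReal.rpow_natCast (x ^ (1/(2:ℝ))) 2, ← ENNReal.rpow_mul]
      norm_num
    calc (∑' k : ℤ, h (n - k) * m k) ^ 2
        = (∑' k : ℤ, (h (n-k)) ^ (1/(2:ℝ)) * ((h (n-k)) ^ (1/(2:ℝ)) * m k)) ^ 2 := by
          congr 1; apply tsum_congr; intro k; rw [← mul_assoc, e1]
      _ ≤ (∑' k : ℤ, ((h (n-k)) ^ (1/(2:ℝ)))^2) * (∑' k : ℤ, ((h (n-k)) ^ (1/(2:ℝ)) * m k)^2) := hc
      _ = (∑' k : ℤ, h (n-k)) * (∑' k : ℤ, h (n-k) * m k ^ 2) := by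
          congr 1
          · apply tsum_congr; intro k; rw [e2]
          · apply tsum_congr; intro k; rw [mul_pow, e2]
      _ = H * ∑' k : ℤ, h (n - k) * m k ^ 2 := by rw [hre n]
  calc ∑' n : ℤ, (∑' k : ℤ, h (n - k) * m k) ^ 2
      ≤ ∑' n : ℤ, H * ∑' k : ℤ, h (n - k) * m k ^ 2 := ENNReal.tsum_le_tsum inner
    _ = H * ∑' n : ℤ, ∑' k : ℤ, h (n - k) * m k ^ 2 := ENNReal.tsum_mul_left
    _ = H * ∑' k : ℤ, ∑' n : ℤ, h (n - k) * m k ^ 2 := by rw [ENNReal.tsum_comm]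
    _ = H * ∑' k : ℤ, m k ^ 2 * ∑' n : ℤ, h (n - k) := by
        congr 1; apply tsum_congr; intro k
        rw [← ENNReal.tsum_mul_left]
        apply tsum_congr; intro n; ring
    _ = H * ∑' k : ℤ, m k ^ 2 * H := by
        congr 1; apply tsum_congr; intro k; rw [hre2 k]
    _ = H ^ 2 * ∑' k : ℤ, m k ^ 2 := by rw [ENNReal.tsum_mul_right]; ring

def ee (s : ℝ) (m : ℤ) : ℝ≥0∞ := ENNReal.ofReal (jb m ^ s)

lemma ee_ne_top {s : ℝ} {m : ℤ} : ee s m ≠ ⊤ := ENNReal.ofReal_ne_top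

lemma ee_mul (s t : ℝ) (m : ℤ) : ee s m * ee t m = ee (s + t) m := by
  rw [ee, ee, ee, ← ENNReal.ofReal_mul (Real.rpow_nonneg (jb_pos m).le s), ← Real.rpow_add (jb_pos m)]

lemma ee_cancel (s : ℝ) (m : ℤ) : ee (-s) m * ee s m = 1 := by
  rw [ee_mul]; simp [ee, Real.rpow_zero]

lemma ee_sq (s : ℝ) (m : ℤ) : ee s m ^ 2 = ee (2 * s) m := by
  rw [pow_two, ee_mul]; ring_nf

lemma summable_jb_rpow {p : ℝ} (hp : 1 < p) : Summable (fun m : ℤ => jb m ^ (-p)) := by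
  have hmaj : Summable (fun m : ℤ => |(m:ℝ)| ^ (-p) + (if m = 0 then (1:ℝ) else 0)) := by
    apply (Real.summable_abs_int_rpow hp).add
    apply summable_of_ne_finset_zero (s := {(0:ℤ)})
    intro b hb
    simp only [Finset.mem_singleton] at hb
    simp [hb]
  apply Summable.of_nonneg_of_le (fun m => Real.rpow_nonneg (jb_pos m).le _) _ hmaj
  intro m
  rcases eq_or_ne m 0 with rfl | hm
  · have : jb 0 = 1 := by simp [jb]
    simp [this, Real.one_rpow]
    positivity
  · have h1 : (1:ℝ) ≤ |(m:ℝ)| := by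
      rw [← Int.cast_abs]
      exact_mod_cast Int.one_le_abs (by simpa using hm)
    have h2 : |(m:ℝ)| ≤ jb m := abs_le_jb m
    have : jb m ^ (-p) ≤ |(m:ℝ)| ^ (-p) :=
      Real.rpow_le_rpow_of_nonpos (by linarith) h2 (by linarith)
    simp only [hm, if_false, add_zero]
    exact this

lemma summable_of_ofReal_tsum_ne_top {d : ℤ → ℝ} (hd : ∀ n, 0 ≤ d n)
    (h : (∑' n, ENNReal.ofReal (d n)) ≠ ⊤) : Summable d := by
  have h' : (∑' n, ((d n).toNNReal : ℝ≥0∞)) ≠ ⊤ := h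
  have hs : Summable (fun n => (d n).toNNReal) := ENNReal.tsum_coe_ne_top_iff_summable.mp h'
  exact (NNReal.summable_coe.mpr hs).congr (fun n => Real.coe_toNNReal _ (hd n))

-- triangle variants
lemma tri1 (n k : ℤ) : jb n ≤ jb (n - k) + jb k := by
  have := jb_triangle (n - k) k; simpa using this

lemma tri2 (n k : ℤ) : jb k ≤ jb (n - k) + jb n := by
  have := jb_triangle n (-(n - k))
  have e : n + -(n - k) = k := by ring
  rw [e, jb_neg] at this; linarith

lemma tri3 (n k : ℤ) : jb (n - k) ≤ jb n + jb k := by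
  have := jb_triangle n (-k)
  have e : n + -k = n - k := by ring
  rw [e, jb_neg] at this; linarith

lemma nnnorm_prodCoeff_le (f g : ℤ → ℂ) (n : ℤ) :
    (‖prodCoeff f g n‖₊ : ℝ≥0∞) ≤ ∑' k : ℤ, (‖f (n - k)‖₊ : ℝ≥0∞) * (‖g k‖₊ : ℝ≥0∞) := by
  by_cases hP : (∑' k : ℤ, (‖f (n - k)‖₊ : ℝ≥0∞) * (‖g k‖₊ : ℝ≥0∞)) = ⊤
  · rw [hP]; exact le_top
  · have h1 : (∑' k : ℤ, ((‖f (n - k)‖₊ * ‖g k‖₊ : ℝ≥0) : ℝ≥0∞)) ≠ ⊤ := by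
      simpa [ENNReal.coe_mul] using hP
    have hs : Summable (fun k : ℤ => ‖f (n - k)‖₊ * ‖g k‖₊) :=
      ENNReal.tsum_coe_ne_top_iff_summable.mp h1
    have hsn : Summable (fun k : ℤ => ‖f (n - k) * g k‖) := by
      apply (NNReal.summable_coe.mpr hs).congr
      intro k; rw [norm_mul]; push_cast; ring
    have hle : ‖prodCoeff f g n‖ ≤ ∑' k : ℤ, ‖f (n - k) * g k‖ :=
      norm_tsum_le_tsum_norm hsn
    calc (‖prodCoeff f g n‖₊ : ℝ≥0∞)
        = ENNReal.ofReal ‖prodCoeff f g n‖ := (ofReal_norm _).symm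
      _ ≤ ENNReal.ofReal (∑' k : ℤ, ‖f (n - k) * g k‖) := ENNReal.ofReal_le_ofReal hle
      _ = ∑' k : ℤ, ENNReal.ofReal ‖f (n - k) * g k‖ :=
          ENNReal.ofReal_tsum_of_nonneg (fun _ => norm_nonneg _) hsn
      _ = ∑' k : ℤ, (‖f (n - k)‖₊ : ℝ≥0∞) * (‖g k‖₊ : ℝ≥0∞) := by
          apply tsum_congr; intro k
          rw [ofReal_norm, enorm_eq_nnnorm, nnnorm_mul, ENNReal.coe_mul]

lemma ee_prod_eq (s₀ s₁ s₂ : ℝ) (n k : ℤ) :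
    ee (-s₀) n * (ee (-s₁) (n - k) * ee (-s₂) k)
      = ENNReal.ofReal (jb n ^ (-s₀) * (jb (n - k) ^ (-s₁) * jb k ^ (-s₂))) := by
  rw [ENNReal.ofReal_mul (Real.rpow_nonneg (jb_pos n).le _),
    ENNReal.ofReal_mul (Real.rpow_nonneg (jb_pos (n - k)).le _)]
  rfl

lemma wb1 (s₀ s₁ s₂ : ℝ) (h20 : 0 ≤ s₂ + s₀) (n k : ℤ)
    (hj1 : jb (n - k) ≤ jb n) (hj2 : jb (n - k) ≤ jb k) :
    ee (-s₀) n * (ee (-s₁) (n - k) * ee (-s₂) k)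
      ≤ ENNReal.ofReal (2 ^ |s₀|) * ee (-(s₀ + s₁ + s₂)) (n - k) := by
  have hcore := weight_core (a := s₁) (b := s₀) (c := s₂) (x := jb (n - k)) (y := jb n)
    (z := jb k) (by linarith) (one_le_jb _) (one_le_jb _) (one_le_jb _) hj1 hj2
    (tri1 n k) (tri2 n k)
  have hr : jb n ^ (-s₀) * (jb (n - k) ^ (-s₁) * jb k ^ (-s₂))
      ≤ 2 ^ |s₀| * jb (n - k) ^ (-(s₀ + s₁ + s₂)) := by
    calc jb n ^ (-s₀) * (jb (n - k) ^ (-s₁) * jb k ^ (-s₂))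
        = jb (n - k) ^ (-s₁) * (jb n ^ (-s₀) * jb k ^ (-s₂)) := by ring
      _ ≤ 2 ^ |s₀| * jb (n - k) ^ (-(s₁ + s₀ + s₂)) := hcore
      _ = 2 ^ |s₀| * jb (n - k) ^ (-(s₀ + s₁ + s₂)) := by congr 2; ring
  calc ee (-s₀) n * (ee (-s₁) (n - k) * ee (-s₂) k)
      = ENNReal.ofReal (jb n ^ (-s₀) * (jb (n - k) ^ (-s₁) * jb k ^ (-s₂))) :=
        ee_prod_eq s₀ s₁ s₂ n k
    _ ≤ ENNReal.ofReal (2 ^ |s₀| * jb (n - k) ^ (-(s₀ + s₁ + s₂))) :=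
        ENNReal.ofReal_le_ofReal hr
    _ = ENNReal.ofReal (2 ^ |s₀|) * ee (-(s₀ + s₁ + s₂)) (n - k) :=
        ENNReal.ofReal_mul (by positivity)

lemma wb2 (s₀ s₁ s₂ : ℝ) (h01 : 0 ≤ s₀ + s₁) (n k : ℤ)
    (hj1 : jb k ≤ jb n) (hj2 : jb k ≤ jb (n - k)) :
    ee (-s₀) n * (ee (-s₁) (n - k) * ee (-s₂) k)
      ≤ ENNReal.ofReal (2 ^ |s₀|) * ee (-(s₀ + s₁ + s₂)) k := by
  have hcore := weight_core (a := s₂) (b := s₀) (c := s₁) (x := jb k) (y := jb n)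
    (z := jb (n - k)) (by linarith) (one_le_jb _) (one_le_jb _) (one_le_jb _) hj1 hj2
    (by have := tri1 n k; linarith) (by have := tri3 n k; linarith)
  have hr : jb n ^ (-s₀) * (jb (n - k) ^ (-s₁) * jb k ^ (-s₂))
      ≤ 2 ^ |s₀| * jb k ^ (-(s₀ + s₁ + s₂)) := by
    calc jb n ^ (-s₀) * (jb (n - k) ^ (-s₁) * jb k ^ (-s₂))
        = jb k ^ (-s₂) * (jb n ^ (-s₀) * jb (n - k) ^ (-s₁)) := by ring
      _ ≤ 2 ^ |s₀| * jb k ^ (-(s₂ + s₀ + s₁)) := hcore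
      _ = 2 ^ |s₀| * jb k ^ (-(s₀ + s₁ + s₂)) := by congr 2; ring
  calc ee (-s₀) n * (ee (-s₁) (n - k) * ee (-s₂) k)
      = ENNReal.ofReal (jb n ^ (-s₀) * (jb (n - k) ^ (-s₁) * jb k ^ (-s₂))) :=
        ee_prod_eq s₀ s₁ s₂ n k
    _ ≤ ENNReal.ofReal (2 ^ |s₀| * jb k ^ (-(s₀ + s₁ + s₂))) := ENNReal.ofReal_le_ofReal hr
    _ = ENNReal.ofReal (2 ^ |s₀|) * ee (-(s₀ + s₁ + s₂)) k := ENNReal.ofReal_mul (by positivity)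

lemma wb3 (s₀ s₁ s₂ : ℝ) (h12 : 0 ≤ s₁ + s₂) (n k : ℤ)
    (hj1 : jb n ≤ jb (n - k)) (hj2 : jb n ≤ jb k) :
    ee (-s₀) n * (ee (-s₁) (n - k) * ee (-s₂) k)
      ≤ ENNReal.ofReal (2 ^ |s₁|) * ee (-(s₀ + s₁ + s₂)) n := by
  have hcore := weight_core (a := s₀) (b := s₁) (c := s₂) (x := jb n) (y := jb (n - k))
    (z := jb k) (by linarith) (one_le_jb _) (one_le_jb _) (one_le_jb _) hj1 hj2
    (tri3 n k) (by have := tri2 n k; linarith)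
  have hr : jb n ^ (-s₀) * (jb (n - k) ^ (-s₁) * jb k ^ (-s₂))
      ≤ 2 ^ |s₁| * jb n ^ (-(s₀ + s₁ + s₂)) := by
    calc jb n ^ (-s₀) * (jb (n - k) ^ (-s₁) * jb k ^ (-s₂))
        = jb n ^ (-s₀) * (jb (n - k) ^ (-s₁) * jb k ^ (-s₂)) := rfl
      _ ≤ 2 ^ |s₁| * jb n ^ (-(s₀ + s₁ + s₂)) := hcore
  calc ee (-s₀) n * (ee (-s₁) (n - k) * ee (-s₂) k)
      = ENNReal.ofReal (jb n ^ (-s₀) * (jb (n - k) ^ (-s₁) * jb k ^ (-s₂))) :=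
        ee_prod_eq s₀ s₁ s₂ n k
    _ ≤ ENNReal.ofReal (2 ^ |s₁| * jb n ^ (-(s₀ + s₁ + s₂))) := ENNReal.ofReal_le_ofReal hr
    _ = ENNReal.ofReal (2 ^ |s₁|) * ee (-(s₀ + s₁ + s₂)) n := ENNReal.ofReal_mul (by positivity)

lemma main_bound (s₀ s₁ s₂ : ℝ) (h01 : 0 ≤ s₀ + s₁) (h12 : 0 ≤ s₁ + s₂)
    (h20 : 0 ≤ s₂ + s₀) (f g : ℤ → ℂ) :
    ∑' n : ℤ, ee (2 * -s₀) n * (‖prodCoeff f g n‖₊ : ℝ≥0∞) ^ 2 ≤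
      (5 * (2 * ENNReal.ofReal (2 ^ |s₀|) ^ 2 + ENNReal.ofReal (2 ^ |s₁|) ^ 2)
        * (∑' m : ℤ, ee (2 * -(s₀ + s₁ + s₂)) m))
      * (∑' j : ℤ, ee (2 * s₁) j * (‖f j‖₊ : ℝ≥0∞) ^ 2)
      * (∑' k : ℤ, ee (2 * s₂) k * (‖g k‖₊ : ℝ≥0∞) ^ 2) := by
  classical
  set σ := s₀ + s₁ + s₂ with hσ
  set C0 := ENNReal.ofReal (2 ^ |s₀|) with hC0
  set C1 := ENNReal.ofReal (2 ^ |s₁|) with hC1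
  set Φ := ∑' m : ℤ, ee (2 * -σ) m with hΦdef
  set a : ℤ → ℝ≥0∞ := fun j => ee s₁ j * (‖f j‖₊ : ℝ≥0∞) with ha
  set b : ℤ → ℝ≥0∞ := fun k => ee s₂ k * (‖g k‖₊ : ℝ≥0∞) with hb
  set X := ∑' j : ℤ, a j ^ 2 with hXdef
  set Y := ∑' k : ℤ, b k ^ 2 with hYdef
  have hsq : ∀ (s : ℝ) (h : ℤ → ℂ) (j : ℤ),
      (ee s j * (‖h j‖₊ : ℝ≥0∞)) ^ 2 = ee (2 * s) j * (‖h j‖₊ : ℝ≥0∞) ^ 2 := by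
    intro s h j; rw [mul_pow, ee_sq]
  have hXeq : (∑' j : ℤ, ee (2 * s₁) j * (‖f j‖₊ : ℝ≥0∞) ^ 2) = X := by
    rw [hXdef]; apply tsum_congr; intro j; rw [ha]; exact (hsq s₁ f j).symm
  have hYeq : (∑' k : ℤ, ee (2 * s₂) k * (‖g k‖₊ : ℝ≥0∞) ^ 2) = Y := by
    rw [hYdef]; apply tsum_congr; intro k; rw [hb]; exact (hsq s₂ g k).symm
  rw [hXeq, hYeq]
  -- the weight function
  set W : ℤ → ℤ → ℝ≥0∞ := fun n k => ee (-s₀) n * (ee (-s₁) (n - k) * ee (-s₂) k) with hW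
  -- the three region pieces
  set c₁ : ℤ → ℝ≥0∞ := fun n => ∑' k : ℤ,
    (if jb (n - k) ≤ jb n ∧ jb (n - k) ≤ jb k then W n k * (a (n - k) * b k) else 0) with hc₁
  set c₂ : ℤ → ℝ≥0∞ := fun n => ∑' k : ℤ,
    (if ¬(jb (n - k) ≤ jb n ∧ jb (n - k) ≤ jb k) ∧ (jb k ≤ jb n ∧ jb k ≤ jb (n - k))
      then W n k * (a (n - k) * b k) else 0) with hc₂
  set c₃ : ℤ → ℝ≥0∞ := fun n => ∑' k : ℤ,
    (if ¬(jb (n - k) ≤ jb n ∧ jb (n - k) ≤ jb k) ∧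
        ¬(jb k ≤ jb n ∧ jb k ≤ jb (n - k)) ∧ (jb n ≤ jb (n - k) ∧ jb n ≤ jb k)
      then W n k * (a (n - k) * b k) else 0) with hc₃
  -- pointwise: the weighted product coefficient is dominated by c₁+c₂+c₃
  have hptwise : ∀ n : ℤ, ee (-s₀) n * (‖prodCoeff f g n‖₊ : ℝ≥0∞) ≤ c₁ n + c₂ n + c₃ n := by
    intro n
    have step1 : ee (-s₀) n * (‖prodCoeff f g n‖₊ : ℝ≥0∞)
        ≤ ∑' k : ℤ, W n k * (a (n - k) * b k) := by
      calc ee (-s₀) n * (‖prodCoeff f g n‖₊ : ℝ≥0∞)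
          ≤ ee (-s₀) n * ∑' k : ℤ, (‖f (n - k)‖₊ : ℝ≥0∞) * (‖g k‖₊ : ℝ≥0∞) :=
            mul_le_mul_right (nnnorm_prodCoeff_le f g n) _
        _ = ∑' k : ℤ, ee (-s₀) n * ((‖f (n - k)‖₊ : ℝ≥0∞) * (‖g k‖₊ : ℝ≥0∞)) :=
            ENNReal.tsum_mul_left.symm
        _ = ∑' k : ℤ, W n k * (a (n - k) * b k) := by
            apply tsum_congr; intro k
            rw [hW, ha, hb]
            simp only
            have e1 : (‖f (n - k)‖₊ : ℝ≥0∞) = ee (-s₁) (n - k) * (ee s₁ (n - k) * (‖f (n - k)‖₊ : ℝ≥0∞)) := by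
              rw [← mul_assoc, ee_cancel, one_mul]
            have e2 : (‖g k‖₊ : ℝ≥0∞) = ee (-s₂) k * (ee s₂ k * (‖g k‖₊ : ℝ≥0∞)) := by
              rw [← mul_assoc, ee_cancel, one_mul]
            calc ee (-s₀) n * ((‖f (n - k)‖₊ : ℝ≥0∞) * (‖g k‖₊ : ℝ≥0∞))
                = ee (-s₀) n * ((ee (-s₁) (n - k) * (ee s₁ (n - k) * (‖f (n - k)‖₊ : ℝ≥0∞)))
                    * (ee (-s₂) k * (ee s₂ k * (‖g k‖₊ : ℝ≥0∞)))) := by rw [← e1, ← e2]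
              _ = ee (-s₀) n * (ee (-s₁) (n - k) * ee (-s₂) k)
                    * ((ee s₁ (n - k) * (‖f (n - k)‖₊ : ℝ≥0∞)) * (ee s₂ k * (‖g k‖₊ : ℝ≥0∞))) := by
                  ring
    have step2 : (∑' k : ℤ, W n k * (a (n - k) * b k)) ≤ c₁ n + c₂ n + c₃ n := by
      rw [hc₁, hc₂, hc₃]
      simp only
      rw [← ENNReal.tsum_add, ← ENNReal.tsum_add]
      apply ENNReal.tsum_le_tsum
      intro k
      by_cases r1 : jb (n - k) ≤ jb n ∧ jb (n - k) ≤ jb k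
      · rw [if_pos r1]
        exact le_self_add.trans le_self_add
      · by_cases r2 : jb k ≤ jb n ∧ jb k ≤ jb (n - k)
        · rw [if_neg r1, if_pos (And.intro r1 r2), zero_add]
          exact le_self_add
        · have r3 : jb n ≤ jb (n - k) ∧ jb n ≤ jb k := by
            rcases le_total (jb (n - k)) (jb n) with h1 | h1 <;>
            rcases le_total (jb k) (jb n) with h2 | h2 <;>
            rcases le_total (jb (n - k)) (jb k) with h3 | h3 <;>
            first
              | (exfalso; exact r1 ⟨by linarith, by linarith⟩)
              | (exfalso; exact r2 ⟨by linarith, by linarith⟩)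
              | exact ⟨by linarith, by linarith⟩
          rw [if_neg r1, if_neg (fun h => r2 h.2), if_pos ⟨r1, r2, r3⟩, zero_add, zero_add]
    exact step1.trans step2
  -- bounds for each piece
  have hb1 : ∀ n : ℤ, c₁ n ≤ C0 * ∑' k : ℤ, (ee (-σ) (n - k) * a (n - k)) * b k := by
    intro n
    rw [hc₁, ← ENNReal.tsum_mul_left]
    apply ENNReal.tsum_le_tsum
    intro k
    by_cases r : jb (n - k) ≤ jb n ∧ jb (n - k) ≤ jb k
    · rw [if_pos r]
      calc W n k * (a (n - k) * b k) ≤ (C0 * ee (-σ) (n - k)) * (a (n - k) * b k) :=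
            mul_le_mul_left (wb1 s₀ s₁ s₂ h20 n k r.1 r.2) _
        _ = C0 * ((ee (-σ) (n - k) * a (n - k)) * b k) := by ring
    · rw [if_neg r]; exact zero_le
  have hb2 : ∀ n : ℤ, c₂ n ≤ C0 * ∑' k : ℤ, a (n - k) * (ee (-σ) k * b k) := by
    intro n
    rw [hc₂, ← ENNReal.tsum_mul_left]
    apply ENNReal.tsum_le_tsum
    intro k
    by_cases r : ¬(jb (n - k) ≤ jb n ∧ jb (n - k) ≤ jb k) ∧ (jb k ≤ jb n ∧ jb k ≤ jb (n - k))
    · rw [if_pos r]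
      calc W n k * (a (n - k) * b k) ≤ (C0 * ee (-σ) k) * (a (n - k) * b k) :=
            mul_le_mul_left (wb2 s₀ s₁ s₂ h01 n k r.2.1 r.2.2) _
        _ = C0 * (a (n - k) * (ee (-σ) k * b k)) := by ring
    · rw [if_neg r]; exact zero_le
  have hb3 : ∀ n : ℤ, c₃ n ≤ C1 * (ee (-σ) n * ∑' k : ℤ, a (n - k) * b k) := by
    intro n
    rw [hc₃, ← ENNReal.tsum_mul_left]
    conv_rhs => rw [← ENNReal.tsum_mul_left]
    apply ENNReal.tsum_le_tsum
    intro k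
    by_cases r : ¬(jb (n - k) ≤ jb n ∧ jb (n - k) ≤ jb k) ∧
        ¬(jb k ≤ jb n ∧ jb k ≤ jb (n - k)) ∧ (jb n ≤ jb (n - k) ∧ jb n ≤ jb k)
    · rw [if_pos r]
      calc W n k * (a (n - k) * b k) ≤ (C1 * ee (-σ) n) * (a (n - k) * b k) :=
            mul_le_mul_left (wb3 s₀ s₁ s₂ h12 n k r.2.2.1 r.2.2.2) _
        _ = C1 * (ee (-σ) n * (a (n - k) * b k)) := by ring
    · rw [if_neg r]; exact zero_le
  -- l² norms of the pieces
  have hΦsq : ∀ m : ℤ, ee (-σ) m ^ 2 = ee (2 * -σ) m := fun m => ee_sq (-σ) m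
  have hCS_ha : (∑' j : ℤ, ee (-σ) j * a j) ^ 2 ≤ Φ * X := by
    calc (∑' j : ℤ, ee (-σ) j * a j) ^ 2
        ≤ (∑' j : ℤ, ee (-σ) j ^ 2) * (∑' j : ℤ, a j ^ 2) := cs_tsum _ _
      _ = Φ * X := by rw [hΦdef, hXdef]; congr 1; apply tsum_congr; intro m; rw [hΦsq]
  have hCS_hb : (∑' k : ℤ, ee (-σ) k * b k) ^ 2 ≤ Φ * Y := by
    calc (∑' k : ℤ, ee (-σ) k * b k) ^ 2
        ≤ (∑' k : ℤ, ee (-σ) k ^ 2) * (∑' k : ℤ, b k ^ 2) := cs_tsum _ _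
      _ = Φ * Y := by rw [hΦdef, hYdef]; congr 1; apply tsum_congr; intro m; rw [hΦsq]
  have hS1 : (∑' n : ℤ, c₁ n ^ 2) ≤ C0 ^ 2 * (Φ * X * Y) := by
    calc ∑' n : ℤ, c₁ n ^ 2
        ≤ ∑' n : ℤ, (C0 * ∑' k : ℤ, (ee (-σ) (n - k) * a (n - k)) * b k) ^ 2 :=
          ENNReal.tsum_le_tsum (fun n => pow_le_pow_left' (hb1 n) 2)
      _ = C0 ^ 2 * ∑' n : ℤ, (∑' k : ℤ, (ee (-σ) (n - k) * a (n - k)) * b k) ^ 2 := by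
          rw [← ENNReal.tsum_mul_left]; apply tsum_congr; intro n; rw [mul_pow]
      _ ≤ C0 ^ 2 * ((∑' j : ℤ, ee (-σ) j * a j) ^ 2 * ∑' k : ℤ, b k ^ 2) := by
          apply mul_le_mul_right
          exact conv_sq_le (fun j => ee (-σ) j * a j) b
      _ ≤ C0 ^ 2 * ((Φ * X) * Y) := by
          apply mul_le_mul_right
          exact mul_le_mul_left hCS_ha _
      _ = C0 ^ 2 * (Φ * X * Y) := rfl
  have hS2 : (∑' n : ℤ, c₂ n ^ 2) ≤ C0 ^ 2 * (Φ * X * Y) := by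
    have hflip : ∀ n : ℤ, (∑' k : ℤ, a (n - k) * (ee (-σ) k * b k))
        = ∑' k : ℤ, (ee (-σ) (n - k) * b (n - k)) * a k := by
      intro n
      rw [← (Equiv.subLeft n).tsum_eq (fun k => a (n - k) * (ee (-σ) k * b k))]
      apply tsum_congr; intro k
      simp only [Equiv.subLeft_apply, sub_sub_cancel]
      ring
    calc ∑' n : ℤ, c₂ n ^ 2
        ≤ ∑' n : ℤ, (C0 * ∑' k : ℤ, a (n - k) * (ee (-σ) k * b k)) ^ 2 :=
          ENNReal.tsum_le_tsum (fun n => pow_le_pow_left' (hb2 n) 2)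
      _ = C0 ^ 2 * ∑' n : ℤ, (∑' k : ℤ, (ee (-σ) (n - k) * b (n - k)) * a k) ^ 2 := by
          rw [← ENNReal.tsum_mul_left]; apply tsum_congr; intro n
          rw [mul_pow, hflip n]
      _ ≤ C0 ^ 2 * ((∑' j : ℤ, ee (-σ) j * b j) ^ 2 * ∑' k : ℤ, a k ^ 2) := by
          apply mul_le_mul_right
          exact conv_sq_le (fun j => ee (-σ) j * b j) a
      _ ≤ C0 ^ 2 * ((Φ * Y) * X) := by
          apply mul_le_mul_right
          exact mul_le_mul_left hCS_hb _
      _ = C0 ^ 2 * (Φ * X * Y) := by ring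
  have hS3 : (∑' n : ℤ, c₃ n ^ 2) ≤ C1 ^ 2 * (Φ * X * Y) := by
    have hinner : ∀ n : ℤ, (∑' k : ℤ, a (n - k) * b k) ^ 2 ≤ X * Y := by
      intro n
      calc (∑' k : ℤ, a (n - k) * b k) ^ 2
          ≤ (∑' k : ℤ, a (n - k) ^ 2) * (∑' k : ℤ, b k ^ 2) := cs_tsum _ _
        _ = X * Y := by
            congr 1
            rw [hXdef, ← (Equiv.subLeft n).tsum_eq (fun j => a j ^ 2)]
            apply tsum_congr; intro k
            simp [Equiv.subLeft_apply]
    calc ∑' n : ℤ, c₃ n ^ 2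
        ≤ ∑' n : ℤ, (C1 * (ee (-σ) n * ∑' k : ℤ, a (n - k) * b k)) ^ 2 :=
          ENNReal.tsum_le_tsum (fun n => pow_le_pow_left' (hb3 n) 2)
      _ = C1 ^ 2 * ∑' n : ℤ, ee (-σ) n ^ 2 * (∑' k : ℤ, a (n - k) * b k) ^ 2 := by
          rw [← ENNReal.tsum_mul_left]; apply tsum_congr; intro n; rw [mul_pow, mul_pow]
      _ ≤ C1 ^ 2 * ∑' n : ℤ, ee (-σ) n ^ 2 * (X * Y) := by
          apply mul_le_mul_right
          exact ENNReal.tsum_le_tsum (fun n => mul_le_mul_right (hinner n) _)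
      _ = C1 ^ 2 * (Φ * (X * Y)) := by
          rw [ENNReal.tsum_mul_right, hΦdef]
          congr 2
          apply tsum_congr; intro m; rw [hΦsq]
      _ = C1 ^ 2 * (Φ * X * Y) := by ring
  -- putting it together
  calc ∑' n : ℤ, ee (2 * -s₀) n * (‖prodCoeff f g n‖₊ : ℝ≥0∞) ^ 2
      = ∑' n : ℤ, (ee (-s₀) n * (‖prodCoeff f g n‖₊ : ℝ≥0∞)) ^ 2 := by
        apply tsum_congr; intro n; rw [mul_pow, ee_sq]
    _ ≤ ∑' n : ℤ, (c₁ n + c₂ n + c₃ n) ^ 2 :=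
        ENNReal.tsum_le_tsum (fun n => pow_le_pow_left' (hptwise n) 2)
    _ ≤ ∑' n : ℤ, 5 * (c₁ n ^ 2 + c₂ n ^ 2 + c₃ n ^ 2) :=
        ENNReal.tsum_le_tsum (fun n => sq_add_three _ _ _)
    _ = 5 * ((∑' n : ℤ, c₁ n ^ 2) + (∑' n : ℤ, c₂ n ^ 2) + (∑' n : ℤ, c₃ n ^ 2)) := by
        rw [ENNReal.tsum_mul_left, ENNReal.tsum_add, ENNReal.tsum_add]
    _ ≤ 5 * (C0 ^ 2 * (Φ * X * Y) + C0 ^ 2 * (Φ * X * Y) + C1 ^ 2 * (Φ * X * Y)) := by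
        apply mul_le_mul_right
        exact add_le_add (add_le_add hS1 hS2) hS3
    _ = (5 * (2 * C0 ^ 2 + C1 ^ 2) * Φ) * X * Y := by ring

end S19

open scoped ENNReal NNReal

/-- Bilinear estimate: if min(s₀+s₁, s₁+s₂, s₂+s₀) ≥ 0 and s₀+s₁+s₂ > 1/2 then
‖fg‖_{H^{−s₀}} ≤ C ‖f‖_{H^{s₁}} ‖g‖_{H^{s₂}}. -/
theorem stmt_19 (s₀ s₁ s₂ : ℝ)
    (h1 : 0 ≤ min (s₀ + s₁) (min (s₁ + s₂) (s₂ + s₀)))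
    (h2 : 1 / 2 < s₀ + s₁ + s₂) :
    ∃ C > 0, ∀ f g : ℤ → ℂ,
      Summable (fun k : ℤ => jb k ^ (2 * s₁) * ‖f k‖ ^ 2) →
      Summable (fun k : ℤ => jb k ^ (2 * s₂) * ‖g k‖ ^ 2) →
      Summable (fun n : ℤ => jb n ^ (2 * (-s₀)) * ‖prodCoeff f g n‖ ^ 2) ∧
      hsNorm (-s₀) (prodCoeff f g) ≤ C * hsNorm s₁ f * hsNorm s₂ g := by
  have h01 : 0 ≤ s₀ + s₁ := le_trans h1 (min_le_left _ _)
  have h12 : 0 ≤ s₁ + s₂ := le_trans h1 ((min_le_right _ _).trans (min_le_left _ _))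
  have h20 : 0 ≤ s₂ + s₀ := le_trans h1 ((min_le_right _ _).trans (min_le_right _ _))
  set σ := s₀ + s₁ + s₂ with hσ
  have hsumσ : Summable (fun m : ℤ => jb m ^ (2 * -σ)) := by
    have h := S19.summable_jb_rpow (p := 2 * σ) (by linarith)
    apply h.congr
    intro m
    congr 1
    ring
  have hΦeq : (∑' m : ℤ, S19.ee (2 * -σ) m)
      = ENNReal.ofReal (∑' m : ℤ, jb m ^ (2 * -σ)) :=
    (ENNReal.ofReal_tsum_of_nonneg (fun m => Real.rpow_nonneg (S19.jb_pos m).le _) hsumσ).symm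
  have hΦne : (∑' m : ℤ, S19.ee (2 * -σ) m) ≠ ⊤ := by
    rw [hΦeq]; exact ENNReal.ofReal_ne_top
  set K : ℝ≥0∞ := 5 * (2 * ENNReal.ofReal (2 ^ |s₀|) ^ 2 + ENNReal.ofReal (2 ^ |s₁|) ^ 2)
    * (∑' m : ℤ, S19.ee (2 * -σ) m) with hK
  have hKne : K ≠ ⊤ := by
    rw [hK]
    apply ENNReal.mul_ne_top _ hΦne
    apply ENNReal.mul_ne_top (by simp)
    exact ENNReal.add_ne_top.mpr ⟨ENNReal.mul_ne_top (by simp) (ENNReal.pow_ne_top ENNReal.ofReal_ne_top),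
      ENNReal.pow_ne_top ENNReal.ofReal_ne_top⟩
  refine ⟨Real.sqrt K.toReal + 1, by positivity, ?_⟩
  intro f g hf hg
  -- translate the sums
  have hterm : ∀ (s : ℝ) (h : ℤ → ℂ) (j : ℤ),
      S19.ee (2 * s) j * (‖h j‖₊ : ℝ≥0∞) ^ 2 = ENNReal.ofReal (jb j ^ (2 * s) * ‖h j‖ ^ 2) := by
    intro s h j
    rw [ENNReal.ofReal_mul (Real.rpow_nonneg (S19.jb_pos j).le _),
      ENNReal.ofReal_pow (norm_nonneg _), ofReal_norm]
    rfl
  have hXeq : (∑' j : ℤ, S19.ee (2 * s₁) j * (‖f j‖₊ : ℝ≥0∞) ^ 2)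
      = ENNReal.ofReal (∑' k : ℤ, jb k ^ (2 * s₁) * ‖f k‖ ^ 2) := by
    rw [ENNReal.ofReal_tsum_of_nonneg (fun k =>
      mul_nonneg (Real.rpow_nonneg (S19.jb_pos k).le _) (by positivity)) hf]
    exact tsum_congr (fun j => hterm s₁ f j)
  have hYeq : (∑' k : ℤ, S19.ee (2 * s₂) k * (‖g k‖₊ : ℝ≥0∞) ^ 2)
      = ENNReal.ofReal (∑' k : ℤ, jb k ^ (2 * s₂) * ‖g k‖ ^ 2) := by
    rw [ENNReal.ofReal_tsum_of_nonneg (fun k =>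
      mul_nonneg (Real.rpow_nonneg (S19.jb_pos k).le _) (by positivity)) hg]
    exact tsum_congr (fun k => hterm s₂ g k)
  have hmain := S19.main_bound s₀ s₁ s₂ h01 h12 h20 f g
  rw [hXeq, hYeq] at hmain
  have hDeq : (∑' n : ℤ, S19.ee (2 * -s₀) n * (‖prodCoeff f g n‖₊ : ℝ≥0∞) ^ 2)
      = ∑' n : ℤ, ENNReal.ofReal (jb n ^ (2 * -s₀) * ‖prodCoeff f g n‖ ^ 2) :=
    tsum_congr (fun n => hterm (-s₀) (prodCoeff f g) n)
  rw [hDeq] at hmain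
  set x := ∑' k : ℤ, jb k ^ (2 * s₁) * ‖f k‖ ^ 2 with hx
  set y := ∑' k : ℤ, jb k ^ (2 * s₂) * ‖g k‖ ^ 2 with hy
  have hxnn : 0 ≤ x := tsum_nonneg (fun k =>
    mul_nonneg (Real.rpow_nonneg (S19.jb_pos k).le _) (by positivity))
  have hynn : 0 ≤ y := tsum_nonneg (fun k =>
    mul_nonneg (Real.rpow_nonneg (S19.jb_pos k).le _) (by positivity))
  have hmain' : (∑' n : ℤ, ENNReal.ofReal (jb n ^ (2 * -s₀) * ‖prodCoeff f g n‖ ^ 2))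
      ≤ K * ENNReal.ofReal x * ENNReal.ofReal y := hmain
  have hRne : K * ENNReal.ofReal x * ENNReal.ofReal y ≠ ⊤ :=
    ENNReal.mul_ne_top (ENNReal.mul_ne_top hKne ENNReal.ofReal_ne_top) ENNReal.ofReal_ne_top
  have hTne : (∑' n : ℤ, ENNReal.ofReal (jb n ^ (2 * -s₀) * ‖prodCoeff f g n‖ ^ 2)) ≠ ⊤ :=
    ne_top_of_le_ne_top hRne hmain'
  have hdnn : ∀ n : ℤ, 0 ≤ jb n ^ (2 * -s₀) * ‖prodCoeff f g n‖ ^ 2 := fun n =>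
    mul_nonneg (Real.rpow_nonneg (S19.jb_pos n).le _) (by positivity)
  have hdsum : Summable (fun n : ℤ => jb n ^ (2 * -s₀) * ‖prodCoeff f g n‖ ^ 2) :=
    S19.summable_of_ofReal_tsum_ne_top hdnn hTne
  refine ⟨hdsum, ?_⟩
  -- the norm estimate
  have htR : (∑' n : ℤ, jb n ^ (2 * -s₀) * ‖prodCoeff f g n‖ ^ 2)
      ≤ K.toReal * x * y := by
    have he : ENNReal.ofReal (∑' n : ℤ, jb n ^ (2 * -s₀) * ‖prodCoeff f g n‖ ^ 2)
        = ∑' n : ℤ, ENNReal.ofReal (jb n ^ (2 * -s₀) * ‖prodCoeff f g n‖ ^ 2) :=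
      ENNReal.ofReal_tsum_of_nonneg hdnn hdsum
    have h1' := ENNReal.toReal_mono hRne hmain'
    rw [← he, ENNReal.toReal_ofReal (tsum_nonneg hdnn)] at h1'
    calc (∑' n : ℤ, jb n ^ (2 * -s₀) * ‖prodCoeff f g n‖ ^ 2)
        ≤ (K * ENNReal.ofReal x * ENNReal.ofReal y).toReal := h1'
      _ = K.toReal * x * y := by
          rw [ENNReal.toReal_mul, ENNReal.toReal_mul, ENNReal.toReal_ofReal hxnn,
            ENNReal.toReal_ofReal hynn]
  have hKnn : 0 ≤ K.toReal := ENNReal.toReal_nonneg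
  have hsqrt : hsNorm (-s₀) (prodCoeff f g) ≤ Real.sqrt (K.toReal * x * y) := by
    rw [hsNorm]
    exact Real.sqrt_le_sqrt htR
  calc hsNorm (-s₀) (prodCoeff f g) ≤ Real.sqrt (K.toReal * x * y) := hsqrt
    _ = Real.sqrt K.toReal * Real.sqrt x * Real.sqrt y := by
        rw [Real.sqrt_mul (by positivity), Real.sqrt_mul hKnn]
    _ ≤ (Real.sqrt K.toReal + 1) * Real.sqrt x * Real.sqrt y := by
        have hx0 := Real.sqrt_nonneg x
        have hy0 := Real.sqrt_nonneg y
        have hk0 := Real.sqrt_nonneg K.toReal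
        nlinarith
    _ = (Real.sqrt K.toReal + 1) * hsNorm s₁ f * hsNorm s₂ g := by
        rw [hsNorm, hsNorm]
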